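/- Let A be a finite subset of an abelian group. Then E⁺(A+A) ≥ |A|² · max{|A−A|, |A+A|}, where E⁺(S) denotes the additive energy of the set S = A+A. -/

import Mathlib

open Finset Pointwise

theorem stmt16 {G : Type*} [AddCommGroup G] [DecidableEq G] (A : Finset G) :
    A.card^2 * max (A - A).card (A + A).card ≤
      (((A + A) ×ˢ (A + A) ×ˢ (A + A) ×ˢ (A + A)).filter
        (fun q => q.1 + q.2.1 = q.2.2.1 + q.2.2.2)).card := by
  classical
  set Q := (((A + A) ×ˢ (A + A) ×ˢ (A + A) ×ˢ (A + A)).filter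
        (fun q => q.1 + q.2.1 = q.2.2.1 + q.2.2.2)) with hQ
  rcases max_choice (A - A).card (A + A).card with h | h <;> rw [h]
  · -- difference set case
    have hf : ∀ x ∈ A - A, ∃ p : G × G, p.1 ∈ A ∧ p.2 ∈ A ∧ p.1 - p.2 = x := by
      intro x hx
      rcases mem_sub.mp hx with ⟨a, ha, b, hb, hab⟩
      exact ⟨(a, b), ha, hb, hab⟩
    choose! f hf1 hf2 hf3 using hf
    have hcard : A.card ^ 2 * (A - A).card = ((A - A) ×ˢ A ×ˢ A).card := by
      simp [card_product, sq]; ring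
    rw [hcard]
    apply Finset.card_le_card_of_injOn
      (fun t => ((f t.1).1 + t.2.1, (f t.1).2 + t.2.2, (f t.1).2 + t.2.1, (f t.1).1 + t.2.2))
    · rintro ⟨x, a, b⟩ ht
      simp only [Finset.mem_coe, mem_product] at ht
      obtain ⟨hx, ha, hb⟩ := ht
      rw [hQ, Finset.mem_coe, mem_filter]
      constructor
      · simp only [mem_product]
        exact ⟨add_mem_add (hf1 x hx) ha, add_mem_add (hf2 x hx) hb,
          add_mem_add (hf2 x hx) ha, add_mem_add (hf1 x hx) hb⟩
      · show (f x).1 + a + ((f x).2 + b) = (f x).2 + a + ((f x).1 + b)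
        abel
    · rintro ⟨x, a, b⟩ ht ⟨x', a', b'⟩ ht' heq
      simp only [Finset.mem_coe, mem_product] at ht ht'
      simp only [Prod.mk.injEq] at heq
      obtain ⟨h1, h2, h3, h4⟩ := heq
      have hxx : x = x' := by
        rw [← hf3 x ht.1, ← hf3 x' ht'.1]
        have := congrArg₂ (· - ·) h1 h3
        simpa using this
      subst hxx
      have haa : a = a' := add_left_cancel h1
      have hbb : b = b' := add_left_cancel h2
      subst haa; subst hbb; rfl
  · -- sumset case
    have hf : ∀ x ∈ A + A, ∃ p : G × G, p.1 ∈ A ∧ p.2 ∈ A ∧ p.1 + p.2 = x := by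
      intro x hx
      rcases mem_add.mp hx with ⟨a, ha, b, hb, hab⟩
      exact ⟨(a, b), ha, hb, hab⟩
    choose! f hf1 hf2 hf3 using hf
    have hcard : A.card ^ 2 * (A + A).card = ((A + A) ×ˢ A ×ˢ A).card := by
      simp [card_product, sq]; ring
    rw [hcard]
    apply Finset.card_le_card_of_injOn
      (fun t => ((f t.1).1 + t.2.1, (f t.1).2 + t.2.2, t.2.1 + t.2.2, t.1))
    · rintro ⟨x, a, b⟩ ht
      simp only [Finset.mem_coe, mem_product] at ht
      obtain ⟨hx, ha, hb⟩ := ht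
      rw [hQ, Finset.mem_coe, mem_filter]
      constructor
      · simp only [mem_product]
        exact ⟨add_mem_add (hf1 x hx) ha, add_mem_add (hf2 x hx) hb,
          add_mem_add ha hb, hx⟩
      · show (f x).1 + a + ((f x).2 + b) = a + b + x
        rw [show a + b + x = a + b + ((f x).1 + (f x).2) by rw [hf3 x hx]]
        abel
    · rintro ⟨x, a, b⟩ ht ⟨x', a', b'⟩ ht' heq
      simp only [Finset.mem_coe, mem_product] at ht ht'
      simp only [Prod.mk.injEq] at heq
      obtain ⟨h1, h2, h3, h4⟩ := heq
      subst h4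
      have haa : a = a' := add_left_cancel h1
      have hbb : b = b' := add_left_cancel h2
      subst haa; subst hbb; rfl
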